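/- Let F be a finite field with q = |F| elements and K a finite field extension of F. Let p₁, ..., p_s ∈ K[X] be linearized polynomials, and for each i let b_i, S_i ∈ K[X] be linearized polynomials all of whose coefficients lie in the image of F in K; let h ∈ K[X] be a nonzero linearized polynomial with all coefficients in the image of F. Let R be the right remainder of Σ_{i=1}^{s} p_i ∘ S_i ∘ b_i under right division by h. Then every coefficient of R lies in the F-span of the set of all coefficients of p₁, ..., p_s. (In particular, the support of the Chinese remainder lifting Φ(e) of an error e is contained in the support of e when the moduli have coefficients in F.) -/
import Mathlib


open Polynomial

/-- A polynomial over `K` is linearized (a `q`-polynomial) if every exponent in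
its support is a power of `q`. -/
def IsLinearized (q : ℕ) {K : Type*} [Semiring K] (p : K[X]) : Prop :=
  ∀ n ∈ p.support, ∃ i : ℕ, n = q ^ i

/-- Support preservation of the Chinese remainder lifting when the moduli data
have coefficients in the base field `F`: the right remainder `R` of
`Σ_i p_i ∘ S_i ∘ b_i` by `h` has all coefficients in the `F`-span of the
coefficients of `p₁, ..., p_s`. -/
theorem supp_crt_lifting_subset (F K : Type*) [Field F] [Fintype F]
    [Field K] [Fintype K] [Algebra F K]
    (q : ℕ) (hq : q = Fintype.card F) (s : ℕ)
    (p b S : Fin s → K[X]) (h R : K[X])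
    (hp : ∀ i, IsLinearized q (p i))
    (hb : ∀ i, IsLinearized q (b i)) (hS : ∀ i, IsLinearized q (S i))
    (hbF : ∀ i n, (b i).coeff n ∈ Set.range (algebraMap F K))
    (hSF : ∀ i n, (S i).coeff n ∈ Set.range (algebraMap F K))
    (hh : IsLinearized q h) (hh0 : h ≠ 0)
    (hhF : ∀ n, h.coeff n ∈ Set.range (algebraMap F K))
    (hR : IsLinearized q R)
    (hrem : ∃ Q : K[X], IsLinearized q Q ∧
      ∑ i, (p i).comp ((S i).comp (b i)) = Q.comp h + R)
    (hRdeg : R.degree < h.degree) :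
    ∀ n, R.coeff n ∈
      Submodule.span F (⋃ i, Set.range (p i).coeff) := by
  set V := Submodule.span F (⋃ i, Set.range (p i).coeff) with hV
  have hq2 : 2 ≤ q := by rw [hq]; exact Fintype.one_lt_card
  -- a linearized polynomial has zero constant coefficient
  have lin0 : ∀ P : K[X], IsLinearized q P → P.coeff 0 = 0 := by
    intro P hP
    by_contra h0
    obtain ⟨i, hi⟩ := hP 0 (mem_support_iff.mpr h0)
    exact absurd hi.symm (Nat.pos_of_ne_zero (by positivity)).ne'
  have hR0 : R.coeff 0 = 0 := lin0 R hR
  -- `h` has positive natDegree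
  have hhdeg : 1 ≤ h.natDegree := by
    obtain ⟨i, hi⟩ := hh h.natDegree (natDegree_mem_support_of_nonzero hh0)
    rw [hi]; exact Nat.one_le_pow _ _ (by omega)
  -- lift moduli data to F[X]
  obtain ⟨h', hh'⟩ := (mem_lifts h).mp ((lifts_iff_coeff_lifts h).mpr hhF)
  have hgl : ∀ i, ∃ g' : F[X],
      Polynomial.map (algebraMap F K) g' = (S i).comp (b i) := by
    intro i
    obtain ⟨S', hS'⟩ := (mem_lifts (S i)).mp ((lifts_iff_coeff_lifts _).mpr (hSF i))
    obtain ⟨b', hb'⟩ := (mem_lifts (b i)).mp ((lifts_iff_coeff_lifts _).mpr (hbF i))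
    exact ⟨S'.comp b', by rw [map_comp, hS', hb']⟩
  choose g' hg' using hgl
  -- every coefficient of every power of `(S i).comp (b i)` lies in the range
  have hpow : ∀ i k m, (((S i).comp (b i)) ^ k).coeff m ∈ Set.range (algebraMap F K) := by
    intro i k m
    rw [← hg' i, ← Polynomial.map_pow, coeff_map]
    exact ⟨_, rfl⟩
  have hhpow : ∀ k m, (h ^ k).coeff m ∈ Set.range (algebraMap F K) := by
    intro k m
    rw [← hh', ← Polynomial.map_pow, coeff_map]
    exact ⟨_, rfl⟩
  -- multiplying an element of V by an element of the range stays in V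
  have hVmul : ∀ x : K, x ∈ V → ∀ y ∈ Set.range (algebraMap F K), x * y ∈ V := by
    rintro x hx y ⟨c, rfl⟩
    rw [mul_comm, ← Algebra.smul_def]
    exact V.smul_mem c hx
  -- the coefficients of the big sum lie in V
  have hAcoeff : ∀ m, (∑ i, (p i).comp ((S i).comp (b i))).coeff m ∈ V := by
    intro m
    rw [finset_sum_coeff]
    refine Submodule.sum_mem _ fun i _ => ?_
    rw [comp_eq_sum_left, Polynomial.sum_def, finset_sum_coeff]
    refine Submodule.sum_mem _ fun e _ => ?_
    rw [coeff_C_mul]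
    refine hVmul _ ?_ _ (hpow i e m)
    exact Submodule.subset_span (Set.mem_iUnion.mpr ⟨i, ⟨e, rfl⟩⟩)
  -- main induction: peel off the leading term of Q
  have main : ∀ d (Q : K[X]), Q.natDegree ≤ d →
      (∀ m, (Q.comp h + R).coeff m ∈ V) → ∀ m, R.coeff m ∈ V := by
    intro d
    induction d with
    | zero =>
      intro Q hQd hA m
      have hQC : Q = C (Q.coeff 0) := eq_C_of_natDegree_eq_zero (Nat.le_zero.mp hQd)
      rcases Nat.eq_zero_or_pos m with rfl | hm
      · rw [hR0]; exact V.zero_mem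
      · have h1 := hA m
        rwa [hQC, C_comp, coeff_add, coeff_C, if_neg hm.ne', zero_add] at h1
    | succ d ih =>
      intro Q hQd hA m
      rcases le_or_gt Q.natDegree d with hle | hgt
      · exact ih Q hle hA m
      have hQdeg : Q.natDegree = d + 1 := le_antisymm hQd hgt
      have hQ1 : 1 ≤ Q.natDegree := by omega
      -- leading coefficient of Q lies in V
      have hlc : Q.leadingCoeff ∈ V := by
        have hD : (Q.comp h + R).coeff (Q.natDegree * h.natDegree)
            = Q.leadingCoeff * h.leadingCoeff ^ Q.natDegree := by
          rw [coeff_add, coeff_comp_degree_mul_degree (by omega),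
            coeff_eq_zero_of_degree_lt, add_zero]
          refine lt_of_lt_of_le hRdeg ?_
          rw [degree_eq_natDegree hh0]
          exact_mod_cast Nat.le_mul_of_pos_left _ (by omega)
        obtain ⟨c, hc⟩ := hhF h.natDegree
        have hc0 : c ≠ 0 := by
          rintro rfl
          exact leadingCoeff_ne_zero.mpr hh0 (by rw [leadingCoeff, ← hc, map_zero])
        have hlcV : Q.leadingCoeff * h.leadingCoeff ^ Q.natDegree ∈ V := by
          rw [← hD]; exact hA _
        have hlch : h.leadingCoeff = algebraMap F K c := by
          rw [Polynomial.leadingCoeff, ← hc]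
        have hK : (algebraMap F K) c ≠ 0 := fun h0 => hc0 ((_root_.map_eq_zero _).mp h0)
        have : Q.leadingCoeff = (c ^ Q.natDegree)⁻¹ •
            (Q.leadingCoeff * h.leadingCoeff ^ Q.natDegree) := by
          rw [hlch, Algebra.smul_def, map_inv₀, map_pow,
            mul_comm Q.leadingCoeff, ← mul_assoc,
            inv_mul_cancel₀ (pow_ne_zero _ hK), one_mul]
        rw [this]
        exact V.smul_mem _ hlcV
      -- subtract the leading term
      have hcomp : Q.comp h = Q.eraseLead.comp h
          + C Q.leadingCoeff * h ^ Q.natDegree := by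
        conv_lhs => rw [← Q.eraseLead_add_C_mul_X_pow]
        rw [add_comp, mul_comp, C_comp, X_pow_comp]
      have hsplit : Q.eraseLead.comp h + R =
          (Q.comp h + R) - C Q.leadingCoeff * h ^ Q.natDegree := by
        rw [hcomp]; ring
      refine ih Q.eraseLead ?_ ?_ m
      · have := Q.eraseLead_natDegree_lt_or_eraseLead_eq_zero
        rcases this with hlt | h0
        · omega
        · rw [h0]; simp
      · intro m'
        rw [hsplit, coeff_sub, coeff_C_mul]
        exact V.sub_mem (hA m') (hVmul _ hlc _ (hhpow _ m'))
  obtain ⟨Q, -, hQeq⟩ := hrem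
  exact main Q.natDegree Q le_rfl (by rw [← hQeq]; exact hAcoeff)
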